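/- (Uniform bound on collinear lattice points in an elliptic annulus.) Let d = 2 and Q(x) = θ_1 x_1² + θ_2 x_2² with 0 < θ_min ≤ θ_j ≤ θ_max. There exists a constant C, depending only on θ_min and θ_max, such that for every real X ≥ 1 and every affine line L ⊂ ℝ², the number of points m ∈ ℤ² lying on L with X ≤ Q(m) ≤ X + 1 is at most C. -/

import Mathlib

/-- Uniform bound on collinear lattice points in an elliptic annulus: for
`Q(x) = θ₁ x₁² + θ₂ x₂²` positive definite, the number of lattice points lying on any
affine line and in the annulus `X ≤ Q ≤ X + 1` is bounded by a constant depending only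
on `θmin`, `θmax` (uniformly in `X ≥ 1` and in the line). -/
theorem collinear_lattice_points_annulus_bounded (θmin θmax : ℝ) (hθmin : 0 < θmin)
    (hminmax : θmin ≤ θmax) :
    ∃ C : ℝ, 0 < C ∧
      ∀ (θ : Fin 2 → ℝ), (∀ j, θmin ≤ θ j ∧ θ j ≤ θmax) →
      ∀ (X : ℝ), 1 ≤ X →
      ∀ (a v : Fin 2 → ℝ), v ≠ 0 →
      (Set.ncard {m : Fin 2 → ℤ |
          (∃ t : ℝ, (fun j => (m j : ℝ)) = a + t • v) ∧
          X ≤ ∑ j, θ j * (m j : ℝ) ^ 2 ∧ ∑ j, θ j * (m j : ℝ) ^ 2 ≤ X + 1} : ℝ) ≤ C := by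
  classical
  have hs0 : 0 < Real.sqrt θmin := Real.sqrt_pos.mpr hθmin
  obtain ⟨K, hKdef⟩ : ∃ K : ℤ, K = ⌊1 / Real.sqrt θmin⌋ := ⟨_, rfl⟩
  have hK0 : (0:ℤ) ≤ K := by rw [hKdef]; exact Int.floor_nonneg.mpr (by positivity)
  refine ⟨2 * ((K : ℝ) + 1), by positivity, ?_⟩
  intro θ hθ X hX a v hv
  obtain ⟨S, hSdef⟩ : ∃ S : Set (Fin 2 → ℤ), S = {m : Fin 2 → ℤ |
      (∃ t : ℝ, (fun j => (m j : ℝ)) = a + t • v) ∧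
      X ≤ ∑ j, θ j * (m j : ℝ) ^ 2 ∧ ∑ j, θ j * (m j : ℝ) ^ 2 ≤ X + 1} := ⟨_, rfl⟩
  rw [show {m : Fin 2 → ℤ |
      (∃ t : ℝ, (fun j => (m j : ℝ)) = a + t • v) ∧
      X ≤ ∑ j, θ j * (m j : ℝ) ^ 2 ∧ ∑ j, θ j * (m j : ℝ) ^ 2 ≤ X + 1} = S from hSdef.symm]
  have hSmem : ∀ m : Fin 2 → ℤ, m ∈ S ↔
      ((∃ t : ℝ, (fun j => (m j : ℝ)) = a + t • v) ∧
      X ≤ ∑ j, θ j * (m j : ℝ) ^ 2 ∧ ∑ j, θ j * (m j : ℝ) ^ 2 ≤ X + 1) := by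
    intro m; rw [hSdef]; rfl
  -- basic positivity facts
  have hθ0 : 0 < θ 0 := lt_of_lt_of_le hθmin (hθ 0).1
  have hθ1 : 0 < θ 1 := lt_of_lt_of_le hθmin (hθ 1).1
  obtain ⟨V, hVdef⟩ : ∃ V : ℝ, V = max |v 0| |v 1| := ⟨_, rfl⟩
  have hv01 : v 0 ≠ 0 ∨ v 1 ≠ 0 := by
    by_contra hc
    push_neg at hc
    exact hv (funext fun i => by fin_cases i <;> simp [hc.1, hc.2])
  have hV : 0 < V := by
    rw [hVdef]
    rcases hv01 with h0 | h1
    · exact lt_of_lt_of_le (abs_pos.mpr h0) (le_max_left _ _)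
    · exact lt_of_lt_of_le (abs_pos.mpr h1) (le_max_right _ _)
  obtain ⟨A, hAdef⟩ : ∃ A : ℝ, A = θ 0 * v 0 ^ 2 + θ 1 * v 1 ^ 2 := ⟨_, rfl⟩
  have hAge : θmin * V ^ 2 ≤ A := by
    rw [hVdef, hAdef]
    rcases max_cases |v 0| |v 1| with ⟨hm, _⟩ | ⟨hm, _⟩ <;> rw [hm, sq_abs]
    · nlinarith [(hθ 0).1, sq_nonneg (v 1), hθ1.le]
    · nlinarith [(hθ 1).1, sq_nonneg (v 0), hθ0.le]
  have hA : 0 < A := lt_of_lt_of_le (by positivity) hAge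
  obtain ⟨B, hBdef⟩ : ∃ B : ℝ, B = 2 * (θ 0 * a 0 * v 0 + θ 1 * a 1 * v 1) := ⟨_, rfl⟩
  obtain ⟨t₀, ht₀def⟩ : ∃ t₀ : ℝ, t₀ = -B / (2 * A) := ⟨_, rfl⟩
  obtain ⟨mmin, hmmindef⟩ : ∃ mm : ℝ, mm = (θ 0 * a 0 ^ 2 + θ 1 * a 1 ^ 2) - B ^ 2 / (4 * A) := ⟨_, rfl⟩
  have hiden : ∀ t : ℝ,
      θ 0 * (a 0 + t * v 0) ^ 2 + θ 1 * (a 1 + t * v 1) ^ 2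
        = A * (t - t₀) ^ 2 + mmin := by
    intro t
    rw [ht₀def, hmmindef, hBdef]
    field_simp
    rw [hAdef]
    ring
  -- the parameter of a point on the line
  obtain ⟨tval, htvdef⟩ : ∃ tv : (Fin 2 → ℤ) → ℝ, tv = fun m =>
    if v 0 ≠ 0 then ((m 0 : ℝ) - a 0) / v 0 else ((m 1 : ℝ) - a 1) / v 1 := ⟨_, rfl⟩
  have hts : ∀ m ∈ S, ∀ j, (m j : ℝ) = a j + tval m * v j := by
    intro m hm j
    obtain ⟨⟨t, ht⟩, -⟩ := (hSmem m).mp hm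
    have hcomp : ∀ i, (m i : ℝ) = a i + t * v i := by
      intro i
      have := congrFun ht i
      simpa using this
    have htv : tval m = t := by
      rw [htvdef]
      beta_reduce
      by_cases h0 : v 0 ≠ 0
      · rw [if_pos h0, hcomp 0]; field_simp; ring
      · rw [if_neg h0]
        have h1 : v 1 ≠ 0 := hv01.resolve_left h0
        rw [hcomp 1]; field_simp; ring
    rw [htv]; exact hcomp j
  have hqm : ∀ m ∈ S,
      X ≤ A * (tval m - t₀) ^ 2 + mmin ∧ A * (tval m - t₀) ^ 2 + mmin ≤ X + 1 := by
    intro m hm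
    obtain ⟨-, h1, h2⟩ := (hSmem m).mp hm
    have hsum : ∑ j, θ j * (m j : ℝ) ^ 2 = A * (tval m - t₀) ^ 2 + mmin := by
      rw [Fin.sum_univ_two, hts m hm 0, hts m hm 1, hiden]
    rw [hsum] at h1 h2
    exact ⟨h1, h2⟩
  obtain ⟨r, hrdef⟩ : ∃ r : ℝ, r = Real.sqrt (max ((X - mmin) / A) 0) := ⟨_, rfl⟩
  obtain ⟨R, hRdef⟩ : ∃ R : ℝ, R = Real.sqrt ((X + 1 - mmin) / A) := ⟨_, rfl⟩
  have hr0 : 0 ≤ r := by rw [hrdef]; exact Real.sqrt_nonneg _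
  have hrsq : r ^ 2 = max ((X - mmin) / A) 0 := by rw [hrdef]; exact Real.sq_sqrt (le_max_right _ _)
  -- bounds on |t - t₀|
  have hup : ∀ m ∈ S, |tval m - t₀| ≤ R := by
    intro m hm
    have h2 := (hqm m hm).2
    have : (tval m - t₀) ^ 2 ≤ (X + 1 - mmin) / A := by
      rw [le_div_iff₀ hA]; nlinarith
    calc |tval m - t₀| = Real.sqrt ((tval m - t₀) ^ 2) := (Real.sqrt_sq_eq_abs _).symm
    _ ≤ R := by rw [hRdef]; exact Real.sqrt_le_sqrt this
  have hlo : ∀ m ∈ S, r ≤ |tval m - t₀| := by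
    intro m hm
    have h1 := (hqm m hm).1
    have hmax : max ((X - mmin) / A) 0 ≤ (tval m - t₀) ^ 2 := by
      refine max_le ?_ (sq_nonneg _)
      rw [div_le_iff₀ hA]; nlinarith
    calc r ≤ Real.sqrt ((tval m - t₀) ^ 2) := by rw [hrdef]; exact Real.sqrt_le_sqrt hmax
    _ = |tval m - t₀| := Real.sqrt_sq_eq_abs _
  -- R - r is small
  have hRr : R ≤ r + Real.sqrt (1 / A) := by
    have harg : (X + 1 - mmin) / A ≤ max ((X - mmin) / A) 0 + 1 / A := by
      have : (X + 1 - mmin) / A = (X - mmin) / A + 1 / A := by field_simp; ring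
      rw [this]
      have := le_max_left ((X - mmin) / A) 0
      linarith
    have hsq : max ((X - mmin) / A) 0 + 1 / A ≤ (r + Real.sqrt (1 / A)) ^ 2 := by
      have h1 : Real.sqrt (1 / A) ^ 2 = 1 / A := Real.sq_sqrt (by positivity)
      have h2 : (r + Real.sqrt (1 / A)) ^ 2
          = r ^ 2 + 2 * r * Real.sqrt (1 / A) + Real.sqrt (1 / A) ^ 2 := by ring
      rw [h2, h1, hrsq]
      have h3 : 0 ≤ 2 * r * Real.sqrt (1 / A) :=
        mul_nonneg (by linarith [hr0]) (Real.sqrt_nonneg _)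
      linarith
    rw [hRdef]
    calc Real.sqrt ((X + 1 - mmin) / A) ≤ Real.sqrt (max ((X - mmin) / A) 0 + 1 / A) :=
      Real.sqrt_le_sqrt harg
    _ ≤ Real.sqrt ((r + Real.sqrt (1 / A)) ^ 2) := Real.sqrt_le_sqrt hsq
    _ = r + Real.sqrt (1 / A) := by
        rw [Real.sqrt_sq (by positivity)]
  have hsA : Real.sqrt (1 / A) * V ≤ 1 / Real.sqrt θmin := by
    have h1 : (1 : ℝ) / A ≤ 1 / (θmin * V ^ 2) := by
      exact one_div_le_one_div_of_le (mul_pos hθmin (pow_pos hV 2)) hAge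
    have h2 : Real.sqrt (1 / (θmin * V ^ 2)) = 1 / (Real.sqrt θmin * V) := by
      rw [one_div, one_div, Real.sqrt_inv, Real.sqrt_mul hθmin.le, Real.sqrt_sq hV.le]
    have h3 : Real.sqrt (1 / A) ≤ 1 / (Real.sqrt θmin * V) := by
      rw [← h2]; exact Real.sqrt_le_sqrt h1
    calc Real.sqrt (1 / A) * V ≤ (1 / (Real.sqrt θmin * V)) * V := by
          exact mul_le_mul_of_nonneg_right h3 hV.le
    _ = 1 / Real.sqrt θmin := by
          rw [one_div, mul_inv, mul_assoc, inv_mul_cancel₀ hV.ne', mul_one, one_div]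
  -- the injection
  obtain ⟨f, hfdef⟩ : ∃ f : (Fin 2 → ℤ) → Bool × ℤ, f =
    fun m => (decide (tval m ≤ t₀), ⌊(|tval m - t₀| - r) * V⌋) := ⟨_, rfl⟩
  obtain ⟨T, hTdef⟩ : ∃ T : Finset (Bool × ℤ), T = Finset.univ ×ˢ Finset.Icc (0 : ℤ) K := ⟨_, rfl⟩
  have hmap : ∀ m ∈ S, f m ∈ (T : Set (Bool × ℤ)) := by
    intro m hm
    simp only [hTdef, Finset.coe_product, Set.mem_prod, Finset.coe_univ, Set.mem_univ,
      true_and, Finset.coe_Icc, Set.mem_Icc, hfdef]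
    have hx0 : 0 ≤ (|tval m - t₀| - r) * V :=
      mul_nonneg (sub_nonneg.mpr (hlo m hm)) hV.le
    have hx1 : (|tval m - t₀| - r) * V ≤ 1 / Real.sqrt θmin := by
      have h4 : |tval m - t₀| - r ≤ Real.sqrt (1 / A) := by
        have := hup m hm; linarith [hRr]
      have h5 : (|tval m - t₀| - r) * V ≤ Real.sqrt (1 / A) * V :=
        mul_le_mul_of_nonneg_right h4 hV.le
      linarith [hsA]
    exact ⟨Int.floor_nonneg.mpr hx0, by rw [hKdef]; exact Int.floor_le_floor hx1⟩
  have hinj : Set.InjOn f S := by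
    intro m hm m' hm' hfeq
    by_contra hne
    obtain ⟨j, hj⟩ : ∃ j, m j ≠ m' j := Function.ne_iff.mp hne
    set t := tval m
    set t' := tval m'
    have hdiff : (m j : ℝ) - (m' j : ℝ) = (t - t') * v j := by
      rw [hts m hm j, hts m' hm' j]; ring
    have h1le : (1 : ℝ) ≤ |t - t'| * V := by
      have hint : (1 : ℝ) ≤ |(m j : ℝ) - (m' j : ℝ)| := by
        rw [← Int.cast_sub, ← Int.cast_abs]
        exact_mod_cast Int.one_le_abs (sub_ne_zero.mpr hj)
      rw [hdiff, abs_mul] at hint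
      have hvj : |v j| ≤ V := by
        rw [hVdef]
        fin_cases j
        · exact le_max_left _ _
        · exact le_max_right _ _
      calc (1:ℝ) ≤ |t - t'| * |v j| := hint
      _ ≤ |t - t'| * V := mul_le_mul_of_nonneg_left hvj (abs_nonneg _)
    have hb : (t ≤ t₀) ↔ (t' ≤ t₀) := by
      have := congrArg Prod.fst hfeq
      simpa [hfdef] using this
    have hfl : ⌊(|t - t₀| - r) * V⌋ = ⌊(|t' - t₀| - r) * V⌋ := by
      have := congrArg Prod.snd hfeq
      simpa [hfdef] using this
    have hlt : |(|t - t₀| - r) * V - (|t' - t₀| - r) * V| < 1 := by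
      rw [abs_sub_lt_iff]
      constructor
      · calc (|t - t₀| - r) * V - (|t' - t₀| - r) * V
            < (⌊(|t - t₀| - r) * V⌋ + 1) - ⌊(|t' - t₀| - r) * V⌋ := by
              have := Int.lt_floor_add_one ((|t - t₀| - r) * V)
              have := Int.floor_le ((|t' - t₀| - r) * V)
              push_cast
              linarith
        _ = 1 := by rw [hfl]; push_cast; ring
      · calc (|t' - t₀| - r) * V - (|t - t₀| - r) * V
            < (⌊(|t' - t₀| - r) * V⌋ + 1) - ⌊(|t - t₀| - r) * V⌋ := by
              have := Int.lt_floor_add_one ((|t' - t₀| - r) * V)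
              have := Int.floor_le ((|t - t₀| - r) * V)
              push_cast
              linarith
        _ = 1 := by rw [hfl]; push_cast; ring
    have hsame : |(|t - t₀| - r) * V - (|t' - t₀| - r) * V| = |t - t'| * V := by
      by_cases hc : t ≤ t₀
      · have hc' : t' ≤ t₀ := hb.mp hc
        rw [abs_of_nonpos (by linarith : t - t₀ ≤ 0), abs_of_nonpos (by linarith : t' - t₀ ≤ 0)]
        rw [show (-(t - t₀) - r) * V - (-(t' - t₀) - r) * V = (t' - t) * V by ring]
        rw [abs_mul, abs_of_nonneg hV.le, abs_sub_comm]
      · have hc' : ¬ t' ≤ t₀ := fun h => hc (hb.mpr h)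
        push_neg at hc hc'
        rw [abs_of_nonneg (by linarith : 0 ≤ t - t₀), abs_of_nonneg (by linarith : 0 ≤ t' - t₀)]
        rw [show (t - t₀ - r) * V - (t' - t₀ - r) * V = (t - t') * V by ring]
        rw [abs_mul, abs_of_nonneg hV.le]
    rw [hsame] at hlt
    linarith
  have hcard := Set.ncard_le_ncard_of_injOn f hmap hinj (T.finite_toSet)
  rw [Set.ncard_coe_finset] at hcard
  have hTcard : T.card = 2 * (K + 1).toNat := by
    rw [hTdef, Finset.card_product, Int.card_Icc]
    simp
  rw [hTcard] at hcard
  have : (S.ncard : ℝ) ≤ 2 * ((K + 1).toNat : ℝ) := by exact_mod_cast hcard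
  have htn : ((K + 1).toNat : ℝ) = (K : ℝ) + 1 := by
    have h : ((K + 1).toNat : ℤ) = K + 1 := Int.toNat_of_nonneg (by linarith)
    exact_mod_cast congrArg (fun z : ℤ => (z : ℝ)) h
  rw [htn] at this
  exact this
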